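/- Let H be a real inner product space, Φ : X → H a feature map, x₁, …, x_m ∈ X training points with labels y₁, …, y_m ∈ ℝ, x′₁, …, x′ₙ ∈ X test points, â₁, …, â_m real weights, ĝ ∈ H, and ν ∈ ℝ. Define V_KMM = (1/m)·Σⱼ âⱼ yⱼ and V_R = (1/m)·Σⱼ âⱼ·(yⱼ − ⟪ĝ, Φ(xⱼ)⟫) + (1/n)·Σᵢ ⟪ĝ, Φ(x′ᵢ)⟫. Then for every h ∈ H, |V_R − ν| ≤ |V_KMM − ν| + (‖ĝ − h‖_H + ‖h‖_H) · ‖(1/m)Σⱼ âⱼΦ(xⱼ) − (1/n)Σᵢ Φ(x′ᵢ)‖_H. -/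

import Mathlib

open RealInnerProductSpace

/-- with `V_KMM = (1/m)Σⱼ âⱼyⱼ` and the robust estimator
`V_R = (1/m)Σⱼ âⱼ(yⱼ − ⟪ĝ, Φ(xⱼ)⟫) + (1/n)Σᵢ ⟪ĝ, Φ(x′ᵢ)⟫`, for every `h ∈ H`,
`|V_R − ν| ≤ |V_KMM − ν| + (‖ĝ − h‖ + ‖h‖)·‖(1/m)Σⱼ âⱼΦ(xⱼ) − (1/n)Σᵢ Φ(x′ᵢ)‖`. -/
theorem stmt15 {X H : Type*} [NormedAddCommGroup H] [InnerProductSpace ℝ H]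
    (Φ : X → H) (m n : ℕ) (x : Fin m → X) (y : Fin m → ℝ) (x' : Fin n → X)
    (a : Fin m → ℝ) (gHat : H) (ν : ℝ) (VKMM VR : ℝ)
    (hVKMM : VKMM = (1 / m : ℝ) * ∑ j, a j * y j)
    (hVR : VR = (1 / m : ℝ) * ∑ j, a j * (y j - ⟪gHat, Φ (x j)⟫)
        + (1 / n : ℝ) * ∑ i, ⟪gHat, Φ (x' i)⟫) :
    ∀ h : H, |VR - ν| ≤ |VKMM - ν| +
      (‖gHat - h‖ + ‖h‖) *
        ‖(1 / m : ℝ) • ∑ j, a j • Φ (x j) - (1 / n : ℝ) • ∑ i, Φ (x' i)‖ := by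
  intro h
  set D : H := (1 / m : ℝ) • ∑ j, a j • Φ (x j) - (1 / n : ℝ) • ∑ i, Φ (x' i) with hD
  have key : VR = VKMM - ⟪gHat, D⟫ := by
    simp only [hVR, hVKMM, hD, inner_sub_right, inner_smul_right, inner_sum, mul_sub,
      Finset.sum_sub_distrib, real_inner_smul_right]
    ring
  have h1 : |VR - ν| ≤ |VKMM - ν| + |⟪gHat, D⟫| := by
    rw [key]
    calc |VKMM - ⟪gHat, D⟫ - ν| = |(VKMM - ν) + (-⟪gHat, D⟫)| := by ring_nf
    _ ≤ |VKMM - ν| + |(-⟪gHat, D⟫)| := abs_add_le _ _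
    _ = |VKMM - ν| + |⟪gHat, D⟫| := by rw [abs_neg]
  refine h1.trans (add_le_add_right ?_ _)
  calc |⟪gHat, D⟫| ≤ ‖gHat‖ * ‖D‖ := abs_real_inner_le_norm _ _
  _ ≤ (‖gHat - h‖ + ‖h‖) * ‖D‖ := by
      apply mul_le_mul_of_nonneg_right _ (norm_nonneg _)
      calc ‖gHat‖ = ‖(gHat - h) + h‖ := by rw [sub_add_cancel]
      _ ≤ ‖gHat - h‖ + ‖h‖ := norm_add_le _ _
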